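/- On $\mathbb{CP}^1$ with four punctures, let $\mathcal{E}$ have degree $-4$ and rank $2$, let $I\subseteq\{1,2,3,4\}$, $\alpha_i\in(0,1/2)$, and set the fixed-point weights $\beta_1(p_i)=\alpha_i$ if $i\in I$, $1-\alpha_i$ if $i\notin I$, and $\beta_2(p_i)=1-\alpha_i$ if $i\in I$, $\alpha_i$ if $i\notin I$. Suppose $\mathcal{L}_1\oplus\mathcal{L}_2\cong\mathcal{O}(a)\oplus\mathcal{O}(b)$ with $a+b=-4$, and stability/nonvanishing conditions: $\deg(\mathcal{L}_2)+|I|-\sum_{i\in I}\alpha_i+\sum_{j\notin I}\alpha_j<0$ and $2+2\deg(\mathcal{L}_2)+|I|\ge0$. Then $\deg(\mathcal{L}_2)\in\{-1,-2,-3\}$, and in fact $\mathcal{L}_1\oplus\mathcal{L}_2\cong\mathcal{O}(d-3)\oplus\mathcal{O}(-1-d)$ where $d=\lfloor |I|/2\rfloor$. -/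
import Mathlib


/-- Proposition 5.1: on the four-punctured sphere, with weights
`αᵢ ∈ (0,1/2)`, the stability condition
`deg 𝓛₂ + |I| - ∑_{i∈I} αᵢ + ∑_{j∉I} αⱼ < 0` together with the nonvanishing
condition `2 + 2 deg 𝓛₂ + |I| ≥ 0` forces
`deg 𝓛₂ = -1 - ⌊|I|/2⌋ ∈ {-1, -2, -3}`. -/
theorem stmt_11 (α : Fin 4 → ℝ) (hα : ∀ i, 0 < α i ∧ α i < 1 / 2)
    (I : Finset (Fin 4)) (L2 : ℤ)
    (hstab : (L2 : ℝ) + (I.card : ℝ) - ∑ i ∈ I, α i + ∑ j ∈ Iᶜ, α j < 0)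
    (hsec : 0 ≤ 2 + 2 * L2 + (I.card : ℤ)) :
    L2 = -1 - ((I.card / 2 : ℕ) : ℤ) ∧ L2 ∈ ({-1, -2, -3} : Set ℤ) := by
  have hcard : I.card ≤ 4 := le_trans (Finset.card_le_card (Finset.subset_univ I)) (by simp)
  have hSc : (0:ℝ) ≤ ∑ j ∈ Iᶜ, α j :=
    Finset.sum_nonneg fun j _ => (hα j).1.le
  have hkey : (L2:ℝ) + (I.card : ℝ) < (I.card : ℝ) / 2 := by
    rcases Finset.eq_empty_or_nonempty I with hI | hI
    · have hIc : (Iᶜ : Finset (Fin 4)).Nonempty := by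
        simp [hI, Finset.univ_nonempty]
      have hScpos : (0:ℝ) < ∑ j ∈ Iᶜ, α j :=
        Finset.sum_pos (fun j _ => (hα j).1) hIc
      simp only [hI, Finset.card_empty, Nat.cast_zero, Finset.sum_empty,
        Finset.compl_empty] at hstab hScpos ⊢
      linarith
    · have hS : ∑ i ∈ I, α i < ∑ i ∈ I, (1/2 : ℝ) :=
        Finset.sum_lt_sum_of_nonempty hI fun i _ => (hα i).2
      rw [Finset.sum_const, nsmul_eq_mul] at hS
      linarith
  have h2 : 2 * L2 + (I.card : ℤ) < 0 := by
    have : (2 * L2 + (I.card : ℤ) : ℝ) < 0 := by push_cast; linarith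
    exact_mod_cast this
  refine ⟨?_, ?_⟩ <;> [skip; simp only [Set.mem_insert_iff, Set.mem_singleton_iff]] <;> omega
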